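/- Let γ, u̇₀ ≠ 0 and ü₀, v₀ be real constants, ψ, q : ℝ → ℝ twice differentiable with ψ nonvanishing, μ a real constant, and χ₁ := (q/ψ − 1)·q. Suppose p := q' + (γ/u̇₀)·μ·q + (γ·ü₀/u̇₀²)·χ₁ (pointwise), and suppose q' satisfies (∂_τ μ) = −q². Define H := q'·p − p'·q. Then H = q'² − q·(q'' − (γ/u̇₀)·q³ + (γ·ü₀/u̇₀²)·q·(q'/ψ − ψ'·q/ψ²)), pointwise. -/

import Mathlib

/-- Lemma 4.2.1: with `χ₁ := (q/ψ − 1) q`, `p := q' + (γ/u̇₀) μ q + (γ ü₀/u̇₀²) χ₁`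
and `μ' = −q²`, the first order Hamiltonian `H := q' p − p' q` equals
`q'² − q (q'' − (γ/u̇₀) q³ + (γ ü₀/u̇₀²) q (q'/ψ − ψ' q/ψ²))`. -/
theorem stmt19 (γ udot uddot v₀ : ℝ) (hγ : γ ≠ 0) (hudot : udot ≠ 0)
    (ψ q : ℝ → ℝ)
    (hψ : Differentiable ℝ ψ) (hψ' : Differentiable ℝ (deriv ψ))
    (hq : Differentiable ℝ q) (hq' : Differentiable ℝ (deriv q))
    (hψ0 : ∀ τ : ℝ, ψ τ ≠ 0)
    (μ : ℝ → ℝ) (hμ : Differentiable ℝ μ)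
    (hμ' : ∀ τ : ℝ, deriv μ τ = -(q τ) ^ 2)
    (p : ℝ → ℝ)
    (hp : ∀ τ : ℝ,
      p τ = deriv q τ + (γ / udot) * μ τ * q τ +
        (γ * uddot / udot ^ 2) * ((q τ / ψ τ - 1) * q τ)) :
    ∀ τ : ℝ,
      deriv q τ * p τ - deriv p τ * q τ =
        (deriv q τ) ^ 2 -
          q τ * (deriv (deriv q) τ - (γ / udot) * (q τ) ^ 3 +
            (γ * uddot / udot ^ 2) * q τ *
              (deriv q τ / ψ τ - deriv ψ τ * q τ / (ψ τ) ^ 2)) := by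
  intro τ
  have hpfun : p = fun τ => deriv q τ + (γ / udot) * μ τ * q τ +
      (γ * uddot / udot ^ 2) * ((q τ / ψ τ - 1) * q τ) := funext hp
  have hqd : HasDerivAt q (deriv q τ) τ := (hq τ).hasDerivAt
  have hqd' : HasDerivAt (deriv q) (deriv (deriv q) τ) τ := (hq' τ).hasDerivAt
  have hψd : HasDerivAt ψ (deriv ψ τ) τ := (hψ τ).hasDerivAt
  have hμd : HasDerivAt μ (deriv μ τ) τ := (hμ τ).hasDerivAt
  have hP : HasDerivAt p
      (deriv (deriv q) τ +
        ((γ / udot) * deriv μ τ * q τ + (γ / udot) * μ τ * deriv q τ) +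
        (γ * uddot / udot ^ 2) *
          (((deriv q τ * ψ τ - q τ * deriv ψ τ) / (ψ τ) ^ 2) * q τ +
            (q τ / ψ τ - 1) * deriv q τ)) τ := by
    rw [hpfun]
    have h1 : HasDerivAt (fun τ => (γ / udot) * μ τ * q τ)
        ((γ / udot) * deriv μ τ * q τ + (γ / udot) * μ τ * deriv q τ) τ := by
      have := ((hμd.const_mul (γ / udot)).mul hqd)
      exact this
    have h2 : HasDerivAt (fun τ => q τ / ψ τ - 1)
        ((deriv q τ * ψ τ - q τ * deriv ψ τ) / (ψ τ) ^ 2) τ :=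
      (hqd.div hψd (hψ0 τ)).sub_const 1
    exact (hqd'.add h1).add (((h2.mul hqd).const_mul (γ * uddot / udot ^ 2)))
  rw [hP.deriv, hp τ, hμ' τ]
  have hψτ := hψ0 τ
  field_simp
  ring
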